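/- Consider the Jacobi 1D uniform dependences B_1(i,j) = (i−1, j−1), B_2(i,j) = (i, j−1), B_3(i,j) = (i+1, j−1) on ℤ², with tiles T(i1, i2) = {(i, j) ∈ ℤ² : s·i1 ≤ i + j < s·(1 + i1) and s·i2 ≤ j − i < s·(1 + i2)} for an integer s ≥ 3, and combined footprint FP(i1,i2) = B_1⟨T(i1,i2)⟩ ∪ B_2⟨T(i1,i2)⟩ ∪ B_3⟨T(i1,i2)⟩ ⊆ ℤ². Then for every (i1, i2) ∈ ℤ², the set of tiles whose combined footprint intersects FP(i1, i2) is exactly {(i1, i2) + v : v ∈ {(0,0), (−1,0), (0,1), (−1,1), (1,0), (0,−1), (1,−1)}}, i.e., FP(i1',i2') ∩ FP(i1,i2) ≠ ∅ if and only if (i1' − i1, i2' − i2) is one of these seven offsets. -/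
import Mathlib

lemma jac_key (s i1 i2 i1' i2' u v u' v' : ℤ) (hs : 3 ≤ s)
    (hd1 : u' - u ≤ 2) (hd2 : -2 ≤ u' - u) (hsum : (u' - u) + (v' - v) = 0)
    (h1l : s*i1 ≤ u) (h1r : u < s*(1+i1)) (h2l : s*i2 ≤ v) (h2r : v < s*(1+i2))
    (h1l' : s*i1' ≤ u') (h1r' : u' < s*(1+i1')) (h2l' : s*i2' ≤ v') (h2r' : v' < s*(1+i2')) :
    (i1'-i1 = 0 ∧ i2'-i2 = 0) ∨ (i1'-i1 = -1 ∧ i2'-i2 = 0) ∨ (i1'-i1 = 0 ∧ i2'-i2 = 1) ∨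
    (i1'-i1 = -1 ∧ i2'-i2 = 1) ∨ (i1'-i1 = 1 ∧ i2'-i2 = 0) ∨ (i1'-i1 = 0 ∧ i2'-i2 = -1) ∨
    (i1'-i1 = 1 ∧ i2'-i2 = -1) := by
  have c1 : i1' - i1 ≤ 1 := by
    by_contra hc; push_neg at hc
    have h2 : (2:ℤ) ≤ i1' - i1 := by omega
    have := mul_le_mul_of_nonneg_left h2 (by linarith : (0:ℤ) ≤ s)
    linarith
  have c2 : -1 ≤ i1' - i1 := by
    by_contra hc; push_neg at hc
    have h2 : (2:ℤ) ≤ i1 - i1' := by omega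
    have := mul_le_mul_of_nonneg_left h2 (by linarith : (0:ℤ) ≤ s)
    linarith
  have c3 : i2' - i2 ≤ 1 := by
    by_contra hc; push_neg at hc
    have h2 : (2:ℤ) ≤ i2' - i2 := by omega
    have := mul_le_mul_of_nonneg_left h2 (by linarith : (0:ℤ) ≤ s)
    linarith
  have c4 : -1 ≤ i2' - i2 := by
    by_contra hc; push_neg at hc
    have h2 : (2:ℤ) ≤ i2 - i2' := by omega
    have := mul_le_mul_of_nonneg_left h2 (by linarith : (0:ℤ) ≤ s)
    linarith
  have c5 : (i1' - i1) + (i2' - i2) ≤ 1 := by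
    by_contra hc; push_neg at hc
    have h2 : (2:ℤ) ≤ (i1' - i1) + (i2' - i2) := by omega
    have := mul_le_mul_of_nonneg_left h2 (by linarith : (0:ℤ) ≤ s)
    linarith
  have c6 : -1 ≤ (i1' - i1) + (i2' - i2) := by
    by_contra hc; push_neg at hc
    have h2 : (2:ℤ) ≤ (i1 - i1') + (i2 - i2') := by omega
    have := mul_le_mul_of_nonneg_left h2 (by linarith : (0:ℤ) ≤ s)
    linarith
  omega

set_option maxHeartbeats 1000000 in
/-- for the Jacobi 1D dependences `B₁(i,j) = (i−1,j−1)`,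
`B₂(i,j) = (i,j−1)`, `B₃(i,j) = (i+1,j−1)` and tile size `s ≥ 3`, the combined
footprints of tiles `(i1',i2')` and `(i1,i2)` intersect iff `(i1'−i1, i2'−i2)` is one of
the seven offsets `(0,0), (−1,0), (0,1), (−1,1), (1,0), (0,−1), (1,−1)`. -/
theorem jacobi1d_consumer_tiles
    (s : ℤ) (hs : 3 ≤ s)
    (T : ℤ → ℤ → Set (ℤ × ℤ))
    (hT : ∀ i1 i2, T i1 i2 = {p : ℤ × ℤ |
        (s * i1 ≤ p.1 + p.2 ∧ p.1 + p.2 < s * (1 + i1)) ∧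
        (s * i2 ≤ p.2 - p.1 ∧ p.2 - p.1 < s * (1 + i2))})
    (FP : ℤ → ℤ → Set (ℤ × ℤ))
    (hFP : ∀ i1 i2, FP i1 i2 =
        (fun p : ℤ × ℤ => (p.1 - 1, p.2 - 1)) '' T i1 i2 ∪
        (fun p : ℤ × ℤ => (p.1, p.2 - 1)) '' T i1 i2 ∪
        (fun p : ℤ × ℤ => (p.1 + 1, p.2 - 1)) '' T i1 i2) :
    ∀ i1 i2 i1' i2' : ℤ,
      (FP i1' i2' ∩ FP i1 i2).Nonempty ↔
        (i1' - i1, i2' - i2) ∈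
          ({(0,0), (-1,0), (0,1), (-1,1), (1,0), (0,-1), (1,-1)} : Set (ℤ × ℤ)) := by
  intro i1 i2 i1' i2'
  constructor
  · rintro ⟨q, hq1, hq2⟩
    obtain ⟨q1, q2⟩ := q
    simp only [hFP, hT, Set.mem_union, Set.mem_image, Set.mem_setOf_eq,
      Prod.mk.injEq] at hq1 hq2
    simp only [Set.mem_insert_iff, Set.mem_singleton_iff, Prod.mk.injEq]
    rcases hq1 with (⟨p', hp', e'⟩ | ⟨p', hp', e'⟩) | ⟨p', hp', e'⟩ <;>
      rcases hq2 with (⟨p, hp, e⟩ | ⟨p, hp, e⟩) | ⟨p, hp, e⟩ <;>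
      · have H := jac_key s i1 i2 i1' i2' (p.1+p.2) (p.2-p.1) (p'.1+p'.2) (p'.2-p'.1) hs
          (by omega) (by omega) (by omega) hp.1.1 hp.1.2 hp.2.1 hp.2.2
          hp'.1.1 hp'.1.2 hp'.2.1 hp'.2.2
        exact H
  · intro h
    simp only [Set.mem_insert_iff, Set.mem_singleton_iff, Prod.mk.injEq] at h
    rcases h with ⟨h1,h2⟩|⟨h1,h2⟩|⟨h1,h2⟩|⟨h1,h2⟩|⟨h1,h2⟩|⟨h1,h2⟩|⟨h1,h2⟩
    · -- (0,0)
      have e1 : i1' = i1 := by omega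
      have e2 : i2' = i2 := by omega
      rw [e1, e2]
      obtain ⟨x, y, k1, k2, k3, k4⟩ : ∃ x y : ℤ,
          s*i1 ≤ x+y ∧ x+y < s*(1+i1) ∧ s*i2 ≤ y-x ∧ y-x < s*(1+i2) := by
        obtain ⟨A, hA⟩ : ∃ A, s*i1 = A := ⟨_, rfl⟩
        obtain ⟨B, hB⟩ : ∃ B, s*i2 = B := ⟨_, rfl⟩
        have r1 : s*(1+i1) = A+s := by rw [← hA]; ring
        have r2 : s*(1+i2) = B+s := by rw [← hB]; ring
        rw [hA, hB, r1, r2]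
        exact ⟨(A - (B+(A+B)%2))/2, (A + (B+(A+B)%2))/2, by omega⟩
      have hmem : ((x, y-1) : ℤ×ℤ) ∈ FP i1 i2 := by
        rw [hFP, hT]
        exact Set.mem_union_left _ (Set.mem_union_right _ ⟨(x, y), ⟨⟨k1, k2⟩, k3, k4⟩, rfl⟩)
      exact ⟨(x, y-1), hmem, hmem⟩
    · -- (-1,0)
      have e1 : i1' = i1 - 1 := by omega
      have e2 : i2' = i2 := by omega
      rw [e1, e2]
      obtain ⟨x, y, k1, k2, k3, k4, k5, k6, k7, k8⟩ : ∃ x y : ℤ,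
          s*i1 ≤ x+y ∧ x+y < s*(1+i1) ∧ s*i2 ≤ y-x ∧ y-x < s*(1+i2) ∧
          s*(i1-1) ≤ (x-1)+y ∧ (x-1)+y < s*(1+(i1-1)) ∧
          s*i2 ≤ y-(x-1) ∧ y-(x-1) < s*(1+i2) := by
        obtain ⟨A, hA⟩ : ∃ A, s*i1 = A := ⟨_, rfl⟩
        obtain ⟨B, hB⟩ : ∃ B, s*i2 = B := ⟨_, rfl⟩
        have r1 : s*(1+i1) = A+s := by rw [← hA]; ring
        have r2 : s*(1+i2) = B+s := by rw [← hB]; ring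
        have r3 : s*(i1-1) = A-s := by rw [← hA]; ring
        have r4 : s*(1+(i1-1)) = A := by rw [← hA]; ring
        rw [hA, hB, r1, r2, r3, r4]
        exact ⟨(A - (B+(A+B)%2))/2, (A + (B+(A+B)%2))/2, by omega⟩
      refine ⟨(x-1, y-1), ?_, ?_⟩
      · rw [hFP, hT]
        exact Set.mem_union_left _ (Set.mem_union_right _
          ⟨(x-1, y), ⟨⟨k5, k6⟩, k7, k8⟩, rfl⟩)
      · rw [hFP, hT]
        exact Set.mem_union_left _ (Set.mem_union_left _
          ⟨(x, y), ⟨⟨k1, k2⟩, k3, k4⟩, rfl⟩)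
    · -- (0,1)
      have e1 : i1' = i1 := by omega
      have e2 : i2' = i2 + 1 := by omega
      rw [e1, e2]
      obtain ⟨x, y, k1, k2, k3, k4, k5, k6, k7, k8⟩ : ∃ x y : ℤ,
          s*i1 ≤ x+y ∧ x+y < s*(1+i1) ∧ s*i2 ≤ y-x ∧ y-x < s*(1+i2) ∧
          s*i1 ≤ (x-1)+y ∧ (x-1)+y < s*(1+i1) ∧
          s*(i2+1) ≤ y-(x-1) ∧ y-(x-1) < s*(1+(i2+1)) := by
        obtain ⟨A, hA⟩ : ∃ A, s*i1 = A := ⟨_, rfl⟩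
        obtain ⟨B, hB⟩ : ∃ B, s*i2 = B := ⟨_, rfl⟩
        have r1 : s*(1+i1) = A+s := by rw [← hA]; ring
        have r2 : s*(1+i2) = B+s := by rw [← hB]; ring
        have r3 : s*(i2+1) = B+s := by rw [← hB]; ring
        have r4 : s*(1+(i2+1)) = B+2*s := by rw [← hB]; ring
        rw [hA, hB, r1, r2, r3, r4]
        exact ⟨((A+1+(A+B+s)%2) - (B+s-1))/2, ((A+1+(A+B+s)%2) + (B+s-1))/2, by omega⟩
      refine ⟨(x-1, y-1), ?_, ?_⟩
      · rw [hFP, hT]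
        exact Set.mem_union_left _ (Set.mem_union_right _
          ⟨(x-1, y), ⟨⟨k5, k6⟩, k7, k8⟩, rfl⟩)
      · rw [hFP, hT]
        exact Set.mem_union_left _ (Set.mem_union_left _
          ⟨(x, y), ⟨⟨k1, k2⟩, k3, k4⟩, rfl⟩)
    · -- (-1,1)
      have e1 : i1' = i1 - 1 := by omega
      have e2 : i2' = i2 + 1 := by omega
      rw [e1, e2]
      obtain ⟨x, y, k1, k2, k3, k4, k5, k6, k7, k8⟩ : ∃ x y : ℤ,
          s*i1 ≤ x+y ∧ x+y < s*(1+i1) ∧ s*i2 ≤ y-x ∧ y-x < s*(1+i2) ∧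
          s*(i1-1) ≤ (x-2)+y ∧ (x-2)+y < s*(1+(i1-1)) ∧
          s*(i2+1) ≤ y-(x-2) ∧ y-(x-2) < s*(1+(i2+1)) := by
        obtain ⟨A, hA⟩ : ∃ A, s*i1 = A := ⟨_, rfl⟩
        obtain ⟨B, hB⟩ : ∃ B, s*i2 = B := ⟨_, rfl⟩
        have r1 : s*(1+i1) = A+s := by rw [← hA]; ring
        have r2 : s*(1+i2) = B+s := by rw [← hB]; ring
        have r3 : s*(i1-1) = A-s := by rw [← hA]; ring
        have r4 : s*(1+(i1-1)) = A := by rw [← hA]; ring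
        have r5 : s*(i2+1) = B+s := by rw [← hB]; ring
        have r6 : s*(1+(i2+1)) = B+2*s := by rw [← hB]; ring
        rw [hA, hB, r1, r2, r3, r4, r5, r6]
        exact ⟨((A+(A+B+s)%2) - (B+s-2))/2, ((A+(A+B+s)%2) + (B+s-2))/2, by omega⟩
      refine ⟨(x-1, y-1), ?_, ?_⟩
      · rw [hFP, hT]
        refine Set.mem_union_right _ ⟨(x-2, y), ⟨⟨k5, k6⟩, k7, k8⟩, ?_⟩
        show ((x-2+1 : ℤ), (y-1 : ℤ)) = ((x-1 : ℤ), (y-1 : ℤ))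
        simp only [Prod.mk.injEq]
        exact ⟨by ring, trivial⟩
      · rw [hFP, hT]
        exact Set.mem_union_left _ (Set.mem_union_left _
          ⟨(x, y), ⟨⟨k1, k2⟩, k3, k4⟩, rfl⟩)
    · -- (1,0)
      have e1 : i1' = i1 + 1 := by omega
      have e2 : i2' = i2 := by omega
      rw [e1, e2]
      obtain ⟨x, y, k1, k2, k3, k4, k5, k6, k7, k8⟩ : ∃ x y : ℤ,
          s*i1 ≤ x+y ∧ x+y < s*(1+i1) ∧ s*i2 ≤ y-x ∧ y-x < s*(1+i2) ∧
          s*(i1+1) ≤ (x+1)+y ∧ (x+1)+y < s*(1+(i1+1)) ∧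
          s*i2 ≤ y-(x+1) ∧ y-(x+1) < s*(1+i2) := by
        obtain ⟨A, hA⟩ : ∃ A, s*i1 = A := ⟨_, rfl⟩
        obtain ⟨B, hB⟩ : ∃ B, s*i2 = B := ⟨_, rfl⟩
        have r1 : s*(1+i1) = A+s := by rw [← hA]; ring
        have r2 : s*(1+i2) = B+s := by rw [← hB]; ring
        have r3 : s*(i1+1) = A+s := by rw [← hA]; ring
        have r4 : s*(1+(i1+1)) = A+2*s := by rw [← hA]; ring
        rw [hA, hB, r1, r2, r3, r4]
        exact ⟨((A+s-1) - (B+1+(A+B+s)%2))/2, ((A+s-1) + (B+1+(A+B+s)%2))/2, by omega⟩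
      refine ⟨(x, y-1), ?_, ?_⟩
      · rw [hFP, hT]
        refine Set.mem_union_left _ (Set.mem_union_left _
          ⟨(x+1, y), ⟨⟨k5, k6⟩, k7, k8⟩, ?_⟩)
        show ((x+1-1 : ℤ), (y-1 : ℤ)) = ((x : ℤ), (y-1 : ℤ))
        simp only [Prod.mk.injEq]
        exact ⟨by ring, trivial⟩
      · rw [hFP, hT]
        exact Set.mem_union_left _ (Set.mem_union_right _
          ⟨(x, y), ⟨⟨k1, k2⟩, k3, k4⟩, rfl⟩)
    · -- (0,-1)
      have e1 : i1' = i1 := by omega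
      have e2 : i2' = i2 - 1 := by omega
      rw [e1, e2]
      obtain ⟨x, y, k1, k2, k3, k4, k5, k6, k7, k8⟩ : ∃ x y : ℤ,
          s*i1 ≤ x+y ∧ x+y < s*(1+i1) ∧ s*i2 ≤ y-x ∧ y-x < s*(1+i2) ∧
          s*i1 ≤ (x+1)+y ∧ (x+1)+y < s*(1+i1) ∧
          s*(i2-1) ≤ y-(x+1) ∧ y-(x+1) < s*(1+(i2-1)) := by
        obtain ⟨A, hA⟩ : ∃ A, s*i1 = A := ⟨_, rfl⟩
        obtain ⟨B, hB⟩ : ∃ B, s*i2 = B := ⟨_, rfl⟩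
        have r1 : s*(1+i1) = A+s := by rw [← hA]; ring
        have r2 : s*(1+i2) = B+s := by rw [← hB]; ring
        have r3 : s*(i2-1) = B-s := by rw [← hB]; ring
        have r4 : s*(1+(i2-1)) = B := by rw [← hB]; ring
        rw [hA, hB, r1, r2, r3, r4]
        exact ⟨((A+(A+B)%2) - B)/2, ((A+(A+B)%2) + B)/2, by omega⟩
      refine ⟨(x, y-1), ?_, ?_⟩
      · rw [hFP, hT]
        refine Set.mem_union_left _ (Set.mem_union_left _
          ⟨(x+1, y), ⟨⟨k5, k6⟩, k7, k8⟩, ?_⟩)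
        show ((x+1-1 : ℤ), (y-1 : ℤ)) = ((x : ℤ), (y-1 : ℤ))
        simp only [Prod.mk.injEq]
        exact ⟨by ring, trivial⟩
      · rw [hFP, hT]
        exact Set.mem_union_left _ (Set.mem_union_right _
          ⟨(x, y), ⟨⟨k1, k2⟩, k3, k4⟩, rfl⟩)
    · -- (1,-1)
      have e1 : i1' = i1 + 1 := by omega
      have e2 : i2' = i2 - 1 := by omega
      rw [e1, e2]
      obtain ⟨x, y, k1, k2, k3, k4, k5, k6, k7, k8⟩ : ∃ x y : ℤ,
          s*i1 ≤ x+y ∧ x+y < s*(1+i1) ∧ s*i2 ≤ y-x ∧ y-x < s*(1+i2) ∧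
          s*(i1+1) ≤ (x+2)+y ∧ (x+2)+y < s*(1+(i1+1)) ∧
          s*(i2-1) ≤ y-(x+2) ∧ y-(x+2) < s*(1+(i2-1)) := by
        obtain ⟨A, hA⟩ : ∃ A, s*i1 = A := ⟨_, rfl⟩
        obtain ⟨B, hB⟩ : ∃ B, s*i2 = B := ⟨_, rfl⟩
        have r1 : s*(1+i1) = A+s := by rw [← hA]; ring
        have r2 : s*(1+i2) = B+s := by rw [← hB]; ring
        have r3 : s*(i1+1) = A+s := by rw [← hA]; ring
        have r4 : s*(1+(i1+1)) = A+2*s := by rw [← hA]; ring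
        have r5 : s*(i2-1) = B-s := by rw [← hB]; ring
        have r6 : s*(1+(i2-1)) = B := by rw [← hB]; ring
        rw [hA, hB, r1, r2, r3, r4, r5, r6]
        exact ⟨((A+s-2+(A+B+s)%2) - B)/2, ((A+s-2+(A+B+s)%2) + B)/2, by omega⟩
      refine ⟨(x+1, y-1), ?_, ?_⟩
      · rw [hFP, hT]
        refine Set.mem_union_left _ (Set.mem_union_left _
          ⟨(x+2, y), ⟨⟨k5, k6⟩, k7, k8⟩, ?_⟩)
        show ((x+2-1 : ℤ), (y-1 : ℤ)) = ((x+1 : ℤ), (y-1 : ℤ))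
        simp only [Prod.mk.injEq]
        exact ⟨by ring, trivial⟩
      · rw [hFP, hT]
        exact Set.mem_union_right _ ⟨(x, y), ⟨⟨k1, k2⟩, k3, k4⟩, rfl⟩
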